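/- Let X be a locally connected compact metric space, Y a metric space, and f: X → Y continuous. Then the induced map f̄: |X|_f → Y preserves the lengths of all rectifiable curves in |X|_f; that is, for every curve γ in |X|_f, length(f̄ ∘ γ) = length(γ). -/

import Mathlib

open ENNReal Set

/-- The connecting pseudometric induced by `f : X → Y`:
`|x−y|_f = inf {diam f(K) : K ⊆ X connected, x ∈ K, y ∈ K}` (`∞` if no such `K`). -/
noncomputable def connDist {X Y : Type*} [TopologicalSpace X] [PseudoEMetricSpace Y]
    (f : X → Y) (x y : X) : ℝ≥0∞ :=
  ⨅ K : {K : Set X // IsConnected K ∧ x ∈ K ∧ y ∈ K}, EMetric.diam (f '' K.1)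

section Aux

variable {X Y : Type*} [TopologicalSpace X] [PseudoEMetricSpace Y] {f : X → Y}

lemma connDist_le {x y : X} {K : Set X} (hK : IsConnected K) (hx : x ∈ K) (hy : y ∈ K) :
    connDist f x y ≤ EMetric.diam (f '' K) :=
  iInf_le (fun K : {K : Set X // IsConnected K ∧ x ∈ K ∧ y ∈ K} => EMetric.diam (f '' K.1)) ⟨K, hK, hx, hy⟩

lemma edist_le_connDist (x y : X) : edist (f x) (f y) ≤ connDist f x y :=
  le_iInf fun K => EMetric.edist_le_diam_of_mem (Set.mem_image_of_mem f K.2.2.1)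
    (Set.mem_image_of_mem f K.2.2.2)

/-- The connectedness envelope: union of all connected sets through `x` whose image
has diameter at most `ε`. -/
def connSet (f : X → Y) (x : X) (ε : ℝ≥0∞) : Set X :=
  ⋃₀ {K | IsConnected K ∧ x ∈ K ∧ EMetric.diam (f '' K) ≤ ε}

lemma mem_connSet_self (x : X) (ε : ℝ≥0∞) : x ∈ connSet f x ε :=
  ⟨{x}, ⟨isConnected_singleton, rfl, by simp only [Set.image_singleton]; exact Metric.ediam_singleton.le.trans zero_le⟩, rfl⟩

lemma isPreconnected_connSet (x : X) (ε : ℝ≥0∞) : IsPreconnected (connSet f x ε) :=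
  isPreconnected_sUnion x _ (fun _ hK => hK.2.1) (fun _ hK => hK.1.isPreconnected)

lemma connSet_mono (x : X) {ε ε' : ℝ≥0∞} (h : ε ≤ ε') : connSet f x ε ⊆ connSet f x ε' :=
  fun _ ⟨K, hK, hy⟩ => ⟨K, ⟨hK.1, hK.2.1, hK.2.2.trans h⟩, hy⟩

lemma connDist_le_of_mem_connSet {x y : X} {ε : ℝ≥0∞} (h : y ∈ connSet f x ε) :
    connDist f x y ≤ ε := by
  obtain ⟨K, ⟨hc, hx, hd⟩, hy⟩ := h
  exact (connDist_le hc hx hy).trans hd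

lemma mem_connSet_of_lt {x y : X} {ε : ℝ≥0∞} (h : connDist f x y < ε) :
    y ∈ connSet f x ε := by
  rw [connDist, iInf_lt_iff] at h
  obtain ⟨K, hK⟩ := h
  exact ⟨K.1, ⟨K.2.1, K.2.2.1, hK.le⟩, K.2.2.2⟩

/-- In a locally connected space, every point has small connected neighborhoods whose
image under a continuous map has small diameter. -/
lemma exists_conn_nhd [LocallyConnectedSpace X] (hf : Continuous f) (x : X) {ε : ℝ≥0∞}
    (hε : 0 < ε) : ∃ U ∈ nhds x, IsConnected U ∧ EMetric.diam (f '' U) ≤ ε := by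
  set m := min ε 1 with hm
  have hm0 : m ≠ 0 := by
    simp only [hm, ne_eq, min_eq_iff]
    intro h
    rcases h with ⟨h, -⟩ | ⟨h, -⟩
    · exact hε.ne' h
    · exact one_ne_zero h
  have hr0 : 0 < m / 2 := ENNReal.div_pos hm0 (by norm_num)
  have hb : f ⁻¹' (EMetric.ball (f x) (m / 2)) ∈ nhds x :=
    hf.continuousAt (EMetric.ball_mem_nhds _ hr0)
  obtain ⟨V, hV, hVconn, hVsub⟩ :=
    locallyConnectedSpace_iff_connected_subsets.mp ‹LocallyConnectedSpace X› x _ hb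
  refine ⟨V, hV, ⟨⟨x, mem_of_mem_nhds hV⟩, hVconn⟩, ?_⟩
  have h1 : f '' V ⊆ EMetric.ball (f x) (m / 2) := by
    rintro - ⟨v, hv, rfl⟩
    exact hVsub hv
  calc EMetric.diam (f '' V) ≤ EMetric.diam (EMetric.ball (f x) (m / 2)) :=
        EMetric.diam_mono h1
    _ ≤ 2 * (m / 2) := EMetric.diam_ball
    _ = m / 2 * 2 := mul_comm _ _
    _ = m := ENNReal.div_mul_cancel (by norm_num) (by norm_num)
    _ ≤ ε := min_le_left _ _

lemma connDist_le_of_mem_closure [LocallyConnectedSpace X] (hf : Continuous f)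
    {x y : X} {ε : ℝ≥0∞} (h : y ∈ closure (connSet f x ε)) : connDist f x y ≤ ε := by
  apply ENNReal.le_of_forall_pos_le_add
  intro δ hδ _
  obtain ⟨U, hU, hUconn, hUdiam⟩ := exists_conn_nhd hf y (ε := (δ : ℝ≥0∞)) (by exact_mod_cast hδ)
  obtain ⟨y', hy'U, hy'C⟩ := mem_closure_iff_nhds.mp h U hU
  obtain ⟨K, ⟨hKconn, hxK, hKdiam⟩, hy'K⟩ := hy'C
  have hconn : IsConnected (K ∪ U) := hKconn.union ⟨y', hy'K, hy'U⟩ hUconn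
  have hxy : connDist f x y ≤ EMetric.diam (f '' (K ∪ U)) :=
    connDist_le hconn (Set.mem_union_left _ hxK) (Set.mem_union_right _ (mem_of_mem_nhds hU))
  rw [Set.image_union] at hxy
  refine hxy.trans ?_
  calc EMetric.diam (f '' K ∪ f '' U)
      ≤ EMetric.diam (f '' K) + edist (f y') (f y') + EMetric.diam (f '' U) :=
        EMetric.diam_union (Set.mem_image_of_mem f hy'K) (Set.mem_image_of_mem f hy'U)
    _ = EMetric.diam (f '' K) + EMetric.diam (f '' U) := by rw [edist_self, add_zero]
    _ ≤ ε + δ := add_le_add hKdiam hUdiam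

end Aux

section Compact

variable {X : Type*} [MetricSpace X] [CompactSpace X]

/-- The intersection of an antitone sequence of nonempty closed preconnected subsets of a
compact metric space is connected. -/
lemma isConnected_iInter_antitone {K : ℕ → Set X} (hK : Antitone K)
    (hne : ∀ n, (K n).Nonempty) (hconn : ∀ n, IsPreconnected (K n))
    (hcl : ∀ n, IsClosed (K n)) : IsConnected (⋂ n, K n) := by
  have hdir : Directed (· ⊇ ·) K := hK.directed_ge
  have hKcl : IsClosed (⋂ n, K n) := isClosed_iInter hcl
  have hne' : (⋂ n, K n).Nonempty :=
    IsCompact.nonempty_iInter_of_directed_nonempty_isCompact_isClosed K hdir hne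
      (fun n => (hcl n).isCompact) hcl
  refine ⟨hne', ?_⟩
  rw [isPreconnected_iff_subset_of_fully_disjoint_closed hKcl]
  intro u v hu hv hsub hdisj
  have hA : IsCompact ((⋂ n, K n) ∩ u) := (hKcl.inter hu).isCompact
  have hB : IsCompact ((⋂ n, K n) ∩ v) := (hKcl.inter hv).isCompact
  have hsep : SeparatedNhds ((⋂ n, K n) ∩ u) ((⋂ n, K n) ∩ v) :=
    SeparatedNhds.of_isCompact_isCompact hA hB
      (hdisj.mono inter_subset_right inter_subset_right)
  obtain ⟨U, V, hU, hV, hAU, hBV, hUV⟩ := hsep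
  obtain ⟨n, hn⟩ : ∃ n, K n ⊆ U ∪ V := by
    apply exists_subset_nhds_of_compactSpace hdir hcl
    intro x hx
    apply (hU.union hV).mem_nhds
    rcases hsub hx with hxu | hxv
    · exact Or.inl (hAU ⟨hx, hxu⟩)
    · exact Or.inr (hBV ⟨hx, hxv⟩)
  rcases (hconn n).subset_or_subset hU hV hUV hn with h | h
  · left
    intro z hz
    rcases hsub hz with hzu | hzv
    · exact hzu
    · exact absurd (Set.mem_inter (h (mem_iInter.mp hz n)) (hBV ⟨hz, hzv⟩))
        (by simpa [Set.disjoint_iff_inter_eq_empty.mp hUV] using Set.not_mem_empty z)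
  · right
    intro z hz
    rcases hsub hz with hzu | hzv
    · exact absurd (Set.mem_inter (hAU ⟨hz, hzu⟩) (h (mem_iInter.mp hz n)))
        (by simpa [Set.disjoint_iff_inter_eq_empty.mp hUV] using Set.not_mem_empty z)
    · exact hzv

variable {Y : Type*} [MetricSpace Y] [LocallyConnectedSpace X] {f : X → Y}

/-- The "fiber" of the connecting pseudometric through `x` is connected. -/
lemma isConnected_connDist_fiber (hf : Continuous f) (x : X) :
    IsConnected {y | connDist f x y = 0} := by
  have key : {y | connDist f x y = 0}
      = ⋂ n : ℕ, closure (connSet f x ((n : ℝ≥0∞) + 1)⁻¹) := by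
    ext y
    simp only [mem_setOf_eq, mem_iInter]
    constructor
    · intro h n
      apply subset_closure
      apply mem_connSet_of_lt
      rw [h]
      exact ENNReal.inv_pos.mpr (by simp)
    · intro h
      have hle : ∀ n : ℕ, connDist f x y ≤ ((n : ℝ≥0∞) + 1)⁻¹ := fun n =>
        connDist_le_of_mem_closure hf (h n)
      refine le_antisymm ?_ zero_le
      apply ENNReal.le_of_forall_pos_le_add
      intro δ hδ _
      obtain ⟨n, hn⟩ := ENNReal.exists_inv_nat_lt (a := (δ : ℝ≥0∞))
        (by exact_mod_cast hδ.ne')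
      refine (hle n).trans ?_
      rw [zero_add]
      exact le_of_lt (lt_of_le_of_lt (ENNReal.inv_le_inv.mpr le_self_add) hn)
  rw [key]
  apply isConnected_iInter_antitone
  · intro n m hnm
    apply closure_mono
    apply connSet_mono
    exact ENNReal.inv_le_inv.mpr (by exact_mod_cast add_le_add_left (Nat.cast_le.mpr hnm) 1)
  · exact fun n => ⟨x, subset_closure (mem_connSet_self x _)⟩
  · exact fun n => (isPreconnected_connSet x _).closure
  · exact fun n => isClosed_closure

end Compact

/-- Preimage of a closed connected set under a continuous surjection from a compact space
to a T2 space with preconnected fibers is connected. -/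
lemma isConnected_preimage_of_fibers {X Z : Type*} [MetricSpace X] [CompactSpace X]
    [EMetricSpace Z] {π : X → Z} (hπc : Continuous π) (hπ : Function.Surjective π)
    (hfib : ∀ z : Z, IsPreconnected (π ⁻¹' {z})) {S : Set Z} (hS : IsConnected S)
    (hScl : IsClosed S) : IsConnected (π ⁻¹' S) := by
  obtain ⟨z0, hz0⟩ := hS.nonempty
  obtain ⟨x0, rfl⟩ := hπ z0
  refine ⟨⟨x0, hz0⟩, ?_⟩
  rw [isPreconnected_closed_iff]
  rintro u v hu hv hsub ⟨a, haT, hau⟩ ⟨b, hbT, hbv⟩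
  have hTcl : IsClosed (π ⁻¹' S) := hScl.preimage hπc
  have hAcl : IsClosed (π '' (π ⁻¹' S ∩ u)) :=
    (((hTcl.inter hu).isCompact).image hπc).isClosed
  have hBcl : IsClosed (π '' (π ⁻¹' S ∩ v)) :=
    (((hTcl.inter hv).isCompact).image hπc).isClosed
  have hSsub : S ⊆ π '' (π ⁻¹' S ∩ u) ∪ π '' (π ⁻¹' S ∩ v) := by
    intro t ht
    obtain ⟨w, rfl⟩ := hπ t
    rcases hsub (show w ∈ π ⁻¹' S from ht) with hw | hw
    · exact Or.inl ⟨w, ⟨ht, hw⟩, rfl⟩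
    · exact Or.inr ⟨w, ⟨ht, hw⟩, rfl⟩
  obtain ⟨t, htS, ⟨w, ⟨hwT, hwu⟩, hwt⟩, ⟨w', ⟨hw'T, hw'v⟩, hw't⟩⟩ :=
    isPreconnected_closed_iff.mp hS.isPreconnected _ _ hAcl hBcl hSsub
      ⟨π a, haT, ⟨a, ⟨haT, hau⟩, rfl⟩⟩ ⟨π b, hbT, ⟨b, ⟨hbT, hbv⟩, rfl⟩⟩
  have hFsub : π ⁻¹' {t} ⊆ u ∪ v := fun w'' hw'' =>
    hsub (by simpa [mem_preimage, (mem_singleton_iff.mp hw'')] using htS)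
  obtain ⟨z, hzF, hzu, hzv⟩ :=
    isPreconnected_closed_iff.mp (hfib t) u v hu hv hFsub
      ⟨w, hwt, hwu⟩ ⟨w', hw't, hw'v⟩
  exact ⟨z, by simpa [mem_preimage, mem_singleton_iff.mp hzF] using htS, hzu, hzv⟩

/-- Summing variations over consecutive intervals. -/
lemma sum_eVariationOn_Icc_le {E : Type*} [PseudoEMetricSpace E] (h : ℝ → E)
    {u : ℕ → ℝ} (hu : Monotone u) (n : ℕ) :
    ∑ i ∈ Finset.range n, eVariationOn h (Set.Icc (u i) (u (i + 1)))
      ≤ eVariationOn h (Set.Icc (u 0) (u n)) := by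
  induction n with
  | zero => simp
  | succ n ih =>
    rw [Finset.sum_range_succ]
    have hIcc := eVariationOn.Icc_add_Icc h (s := Set.univ) (hu (Nat.zero_le n))
      (hu (Nat.le_succ n)) (Set.mem_univ (u n))
    simp only [Set.univ_inter] at hIcc
    calc ∑ i ∈ Finset.range n, eVariationOn h (Set.Icc (u i) (u (i + 1)))
          + eVariationOn h (Set.Icc (u n) (u (n + 1)))
        ≤ eVariationOn h (Set.Icc (u 0) (u n))
          + eVariationOn h (Set.Icc (u n) (u (n + 1))) := add_le_add_left ih _
      _ = eVariationOn h (Set.Icc (u 0) (u (n + 1))) := hIcc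

/-- for `X` a locally connected compact metric space, `Y` a metric
space and `f : X → Y` continuous, the induced map `f̄ : |X|_f → Y` preserves the
lengths of all curves in `|X|_f`: for every curve `γ` in `|X|_f`,
`length (f̄ ∘ γ) = length γ`.  Here `|X|_f` is represented by any metric space
`Z` with a surjection `π` realizing the connecting pseudometric, `f̄` by any map
`g : Z → Y` with `g ∘ π = f`, and length is the (extended) total variation. -/
theorem induced_map_preserves_length {X Y Z : Type*}
    [MetricSpace X] [CompactSpace X] [LocallyConnectedSpace X]
    [MetricSpace Y] [EMetricSpace Z]
    (f : X → Y) (hf : Continuous f)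
    (π : X → Z) (hπ : Function.Surjective π)
    (hdist : ∀ x y : X, edist (π x) (π y) = connDist f x y)
    (g : Z → Y) (hg : ∀ x : X, g (π x) = f x) :
    ∀ γ : ℝ → Z, ContinuousOn γ (Set.Icc 0 1) →
      eVariationOn (g ∘ γ) (Set.Icc 0 1) = eVariationOn γ (Set.Icc 0 1) := by
  -- π is continuous
  have hπcont : Continuous π := by
    rw [continuous_iff_continuousAt]
    intro x
    rw [ContinuousAt, EMetric.tendsto_nhds]
    intro ε hε
    obtain ⟨U, hU, hUconn, hUdiam⟩ := exists_conn_nhd (f := f) hf x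
      (ε := min ε 1 / 2) (ENNReal.div_pos (lt_min hε zero_lt_one).ne' (by norm_num))
    filter_upwards [hU] with y hy
    have h1 : edist (π y) (π x) ≤ min ε 1 / 2 := by
      rw [edist_comm, hdist]
      exact (connDist_le hUconn (mem_of_mem_nhds hU) hy).trans hUdiam
    have h2 : min ε 1 / 2 < min ε 1 :=
      ENNReal.half_lt_self (lt_min hε zero_lt_one).ne' (by simp)
    exact lt_of_le_of_lt h1 (h2.trans_le (min_le_left _ _))
  -- fibers of π are connected
  have hfib : ∀ z : Z, IsPreconnected (π ⁻¹' {z}) := by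
    intro z
    obtain ⟨x, rfl⟩ := hπ z
    have hset : π ⁻¹' {π x} = {y | connDist f x y = 0} := by
      ext y
      simp only [mem_preimage, mem_singleton_iff, mem_setOf_eq]
      rw [← hdist x y, edist_comm (π x) (π y)]
      exact edist_eq_zero.symm
    rw [hset]
    exact (isConnected_connDist_fiber hf x).isPreconnected
  -- key estimate: edist of points of a compact connected set bounded by diam of g-image
  have key : ∀ (S : Set Z), IsCompact S → IsConnected S →
      ∀ z ∈ S, ∀ z' ∈ S, edist z z' ≤ EMetric.diam (g '' S) := by
    intro S hScomp hSconn z hz z' hz'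
    obtain ⟨x, rfl⟩ := hπ z
    obtain ⟨y, rfl⟩ := hπ z'
    have hT : IsConnected (π ⁻¹' S) :=
      isConnected_preimage_of_fibers hπcont hπ hfib hSconn hScomp.isClosed
    have h1 : edist (π x) (π y) ≤ EMetric.diam (f '' (π ⁻¹' S)) := by
      rw [hdist]
      exact connDist_le hT hz hz'
    have h2 : f '' (π ⁻¹' S) = g '' S := by
      calc f '' (π ⁻¹' S) = (g ∘ π) '' (π ⁻¹' S) := by
            apply Set.image_congr
            intro a _
            exact (hg a).symm
        _ = g '' (π '' (π ⁻¹' S)) := Set.image_comp g π _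
        _ = g '' S := by rw [Set.image_preimage_eq S hπ]
    rwa [h2] at h1
  intro γ hγ
  apply le_antisymm
  · -- g is 1-Lipschitz
    have hL : LipschitzWith 1 g := by
      intro z z'
      obtain ⟨x, rfl⟩ := hπ z
      obtain ⟨y, rfl⟩ := hπ z'
      rw [hg, hg, hdist]
      simpa using edist_le_connDist x y
    have := (hL.lipschitzOnWith (s := Set.univ)).comp_eVariationOn_le
      (Set.mapsTo_univ γ (Set.Icc 0 1))
    simpa using this
  · -- the reverse inequality
    rw [show eVariationOn γ (Set.Icc 0 1) = ⨆ p : ℕ ×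
        {u : ℕ → ℝ // Monotone u ∧ ∀ i, u i ∈ Set.Icc (0:ℝ) 1},
        ∑ i ∈ Finset.range p.1, edist (γ (p.2.1 (i + 1))) (γ (p.2.1 i)) from rfl]
    refine iSup_le ?_
    rintro ⟨n, u, hu, us⟩
    calc ∑ i ∈ Finset.range n, edist (γ (u (i + 1))) (γ (u i))
        ≤ ∑ i ∈ Finset.range n, eVariationOn (g ∘ γ) (Set.Icc (u i) (u (i + 1))) := by
          apply Finset.sum_le_sum
          intro i _
          have h1 : u i ≤ u (i + 1) := hu (Nat.le_succ i)
          have hIcc : Set.Icc (u i) (u (i + 1)) ⊆ Set.Icc (0:ℝ) 1 :=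
            Set.Icc_subset_Icc (us i).1 (us (i + 1)).2
          have hScomp : IsCompact (γ '' Set.Icc (u i) (u (i + 1))) :=
            isCompact_Icc.image_of_continuousOn (hγ.mono hIcc)
          have hSconn : IsConnected (γ '' Set.Icc (u i) (u (i + 1))) :=
            ⟨((Set.nonempty_Icc.mpr h1).image _), isPreconnected_Icc.image _ (hγ.mono hIcc)⟩
          have hkey := key _ hScomp hSconn _
            (Set.mem_image_of_mem γ (Set.right_mem_Icc.mpr h1)) _
            (Set.mem_image_of_mem γ (Set.left_mem_Icc.mpr h1))
          rw [← Set.image_comp] at hkey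
          refine hkey.trans ?_
          apply EMetric.diam_le
          rintro a ⟨p, hp, rfl⟩ b ⟨q, hq, rfl⟩
          exact eVariationOn.edist_le (g ∘ γ) hp hq
      _ ≤ eVariationOn (g ∘ γ) (Set.Icc (u 0) (u n)) :=
          sum_eVariationOn_Icc_le (g ∘ γ) hu n
      _ ≤ eVariationOn (g ∘ γ) (Set.Icc 0 1) :=
          eVariationOn.mono _ (Set.Icc_subset_Icc (us 0).1 (us n).2)
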